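/- Let R = {r_1,…,r_m} be strings over an alphabet Σ. There exists a common supersequence of all strings in R of length at most λ if and only if there exists a flow diagram with at most λ+2 nodes (including s and t) whose interior nodes are labelled by characters of Σ such that each string r_i appears as the label sequence of some s–t path. Hence the Flow Diagram problem restricted to this encoding is equivalent to Shortest Common Supersequence. -/

import Mathlib

theorem sublist_exists_chain {A : Type*} : ∀ {r w : List A}, r.Sublist w →
    ∃ p : List (Fin w.length), p.Chain' (· < ·) ∧ p.map w.get = r := by
  intro r w h
  induction h with
  | slnil => exact ⟨[], by simp [List.Chain']⟩
  | cons a h ih =>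
    obtain ⟨p, hc, hm⟩ := ih
    refine ⟨p.map Fin.succ, ?_, ?_⟩
    · exact List.isChain_map_of_isChain _ (fun h => by simpa using h) hc
    · rw [List.map_map]; rw [← hm]; rfl
  | cons_cons a h ih =>
    obtain ⟨p, hc, hm⟩ := ih
    refine ⟨⟨0, Nat.succ_pos _⟩ :: p.map Fin.succ, ?_, ?_⟩
    · refine List.isChain_cons.2 ⟨?_, List.isChain_map_of_isChain _ (fun h => by simpa using h) hc⟩
      intro y hy
      obtain ⟨z, hz, rfl⟩ := List.mem_map.1 (List.mem_of_mem_head? hy)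
      simp [Fin.lt_def]
    · simp only [List.map_cons, List.map_map]
      rw [← hm]; rfl

theorem chain_lt_sublist_ofFn {C : Type*} {n : ℕ} (f : Fin n → C)
    (p : List (Fin n)) (hc : p.Chain' (· < ·)) : (p.map f).Sublist (List.ofFn f) := by
  have hp : p.Pairwise (· < ·) := List.isChain_iff_pairwise.1 hc
  have hsub : p.Sublist (List.finRange n) := by
    apply List.sublist_of_subperm_of_pairwise (r := (· ≤ ·))
    · exact (hp.nodup).subperm (fun x _ => List.mem_finRange x)
    · exact hp.imp le_of_lt
    · exact List.pairwise_le_finRange n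
  rw [List.ofFn_eq_map]
  exact hsub.map f

/-- A flow diagram: a node-labelled DAG (interior nodes indexed in topological order)
with a source `s` and sink `t`; `src v` means there is an edge `s → v`, `snk v` means
there is an edge `v → t`, and `stEdge` records a direct edge `s → t`. -/
structure FlowDiagram (C : Type*) where
  numInterior : ℕ
  label : Fin numInterior → C
  edge : Fin numInterior → Fin numInterior → Prop
  edge_lt : ∀ i j, edge i j → i < j
  src : Fin numInterior → Prop
  snk : Fin numInterior → Prop
  stEdge : Prop

/-- The string `r` appears as the label sequence of an `s`–`t` path of `F`. -/
def FlowDiagram.Represents {C : Type*} (F : FlowDiagram C) (r : List C) : Prop :=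
  ∃ p : List (Fin F.numInterior),
    List.Chain' F.edge p ∧ p.map F.label = r ∧
    (∀ x ∈ p.head?, F.src x) ∧ (∀ x ∈ p.getLast?, F.snk x) ∧
    (p = [] → F.stEdge)

/-- there is a common supersequence of all strings of `R` of length at most
`lam` iff there is a flow diagram with at most `lam + 2` nodes (including `s` and `t`)
whose interior nodes are labelled by characters such that every string of `R` appears as
the label sequence of an `s`–`t` path.  This is the equivalence between the Flow Diagram
problem (under this encoding) and Shortest Common Supersequence. -/
theorem stmt_1 {A : Type*} (R : Finset (List A)) (lam : ℕ) :
    (∃ w : List A, w.length ≤ lam ∧ ∀ r ∈ R, r.Sublist w) ↔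
      (∃ F : FlowDiagram A, F.numInterior + 2 ≤ lam + 2 ∧
        ∀ r ∈ R, F.Represents r) := by
  constructor
  · rintro ⟨w, hw, hR⟩
    refine ⟨⟨w.length, w.get, (· < ·), fun _ _ h => h,
      fun _ => True, fun _ => True, True⟩, by simpa using hw, ?_⟩
    intro r hr
    obtain ⟨p, hc, hm⟩ := sublist_exists_chain (hR r hr)
    exact ⟨p, hc, hm, fun _ _ => trivial, fun _ _ => trivial, fun _ => trivial⟩
  · rintro ⟨F, hF, hR⟩
    refine ⟨List.ofFn F.label, by simpa using hF, ?_⟩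
    intro r hr
    obtain ⟨p, hc, hm, -⟩ := hR r hr
    rw [← hm]
    exact chain_lt_sublist_ofFn F.label p (hc.imp F.edge_lt)
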